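/- Let X be a CAT(-1) space, r > 0, and let {C_i} be a family of convex subsets of X that is r-separated (the distance between any two distinct members is at least r). Then the family has bounded penetration: there is a function D(ρ) such that for any two distinct members C_i, C_j, the intersection of their closed ρ-neighborhoods has diameter at most D(ρ). -/

import Mathlib

noncomputable section
open Metric Set

/-- `γ` restricted to `[a,b]` is a unit-speed (minimizing) geodesic segment. -/
def IsGeodesicOn {X : Type*} [MetricSpace X] (γ : ℝ → X) (a b : ℝ) : Prop :=
  a ≤ b ∧ ∀ s ∈ Set.Icc a b, ∀ t ∈ Set.Icc a b, dist (γ s) (γ t) = |s - t|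

/-- Every pair of points is joined by a geodesic segment. -/
def IsGeodesicSpace (X : Type*) [MetricSpace X] : Prop :=
  ∀ x y : X, ∃ γ : ℝ → X, IsGeodesicOn γ 0 (dist x y) ∧ γ 0 = x ∧ γ (dist x y) = y

/-- Comparison condition defining CAT spaces with model space `M`:
for any geodesic triangle and a comparison triangle in `M`, distances between
points on two sides issuing from a common vertex are bounded by the
corresponding distances in the comparison triangle. -/
def CATWith (M : Type*) [MetricSpace M] (X : Type*) [MetricSpace X] : Prop :=
  IsGeodesicSpace X ∧
  ∀ (p q r : X) (γ δ : ℝ → X),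
    IsGeodesicOn γ 0 (dist p q) → γ 0 = p → γ (dist p q) = q →
    IsGeodesicOn δ 0 (dist p r) → δ 0 = p → δ (dist p r) = r →
    ∀ (p' q' r' : M) (γ' δ' : ℝ → M),
      dist p' q' = dist p q → dist p' r' = dist p r → dist q' r' = dist q r →
      IsGeodesicOn γ' 0 (dist p q) → γ' 0 = p' → γ' (dist p q) = q' →
      IsGeodesicOn δ' 0 (dist p r) → δ' 0 = p' → δ' (dist p r) = r' →
      ∀ s ∈ Set.Icc (0:ℝ) (dist p q), ∀ t ∈ Set.Icc (0:ℝ) (dist p r),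
        dist (γ s) (δ t) ≤ dist (γ' s) (δ' t)

/-- A CAT(-1) space: comparison with the hyperbolic plane of curvature `-1`. -/
def CATMinusOne (X : Type*) [MetricSpace X] : Prop := CATWith UpperHalfPlane X

/-- A CAT(0) space: comparison with the Euclidean plane. -/
def CATZero (X : Type*) [MetricSpace X] : Prop := CATWith (EuclideanSpace ℝ (Fin 2)) X

/-- A subset is (geodesically) convex if it contains every geodesic segment
between any two of its points. -/
def GConvex {X : Type*} [MetricSpace X] (A : Set X) : Prop :=
  ∀ (γ : ℝ → X) (a b : ℝ), IsGeodesicOn γ a b → γ a ∈ A → γ b ∈ A →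
    ∀ t ∈ Set.Icc a b, γ t ∈ A

/-- Distance between two subsets: the infimum of distances between their points. -/
def setDist {X : Type*} [MetricSpace X] (A B : Set X) : ℝ :=
  sInf ((fun p : X × X => dist p.1 p.2) '' A ×ˢ B)

end

noncomputable section BP
open Real UpperHalfPlane

/- ## The upper half plane: explicit geodesics -/

def vert (t : ℝ) : ℍ := UpperHalfPlane.mk ⟨0, Real.exp t⟩ (Real.exp_pos t)

lemma dist_vert (s t : ℝ) : dist (vert s) (vert t) = |s - t| := by
  have := (isometry_vertical_line 0).dist_eq s t
  simpa [vert, Real.dist_eq] using this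

def Dd (α t : ℝ) : ℝ := Real.sin α ^ 2 * Real.exp t ^ 2 + Real.cos α ^ 2

lemma Dd_pos (α t : ℝ) : 0 < Dd α t := by
  have h := Real.sin_sq_add_cos_sq α
  have he := Real.exp_pos t
  unfold Dd
  nlinarith [sq_nonneg (Real.sin α), sq_nonneg (Real.cos α), sq_nonneg (Real.exp t), sq_nonneg (Real.sin α * Real.exp t)]

def rpt (α t : ℝ) : ℍ :=
  UpperHalfPlane.mk ⟨Real.sin α * Real.cos α * (1 - Real.exp t ^ 2) / Dd α t,
    Real.exp t / Dd α t⟩ (div_pos (Real.exp_pos t) (Dd_pos α t))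

def rotM (α : ℝ) : Matrix.SpecialLinearGroup (Fin 2) ℝ :=
  ⟨!![Real.cos α, Real.sin α; -Real.sin α, Real.cos α], by
    simp [Matrix.det_fin_two_of]; ring_nf; rw [add_comm]; exact Real.sin_sq_add_cos_sq α⟩

lemma rpt_eq (α t : ℝ) : rotM α • vert t = rpt α t := by
  have hD := Dd_pos α t
  apply UpperHalfPlane.ext
  rw [UpperHalfPlane.specialLinearGroup_apply, UpperHalfPlane.coe_mk, div_eq_iff ?_]
  · simp only [rotM, vert, rpt, UpperHalfPlane.coe_mk, Matrix.SpecialLinearGroup.coe_mk,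
      Matrix.cons_val', Matrix.cons_val_zero, Matrix.cons_val_one, Matrix.head_cons,
      Matrix.head_fin_const, Matrix.empty_val', Matrix.cons_val_fin_one,
      Algebra.algebraMap_self, RingHom.id_apply]
    rw [Complex.ext_iff]
    have hpy := Real.sin_sq_add_cos_sq α
    constructor
    · simp [Complex.add_re, Complex.mul_re, Complex.add_im, Complex.mul_im,
        Complex.cos_ofReal_re, Complex.sin_ofReal_re]
      field_simp
      unfold Dd
      linear_combination (Real.sin α * Real.exp t ^ 2) * hpy
    · simp [Complex.add_re, Complex.mul_re, Complex.add_im, Complex.mul_im,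
        Complex.cos_ofReal_re, Complex.sin_ofReal_re]
      field_simp
      unfold Dd
      linear_combination (Real.exp t * (Real.sin α ^ 2 * Real.exp t ^ 2 + Real.cos α ^ 2) * Real.cos α + ((-1) * Real.sin α ^ 2 * Real.cos α ^ 1 * rexp t ^ 3 + (1) * Real.cos α ^ 1 + (-1) * Real.cos α ^ 3 * rexp t ^ 1)) * hpy
  · intro h
    rw [Complex.ext_iff] at h
    simp only [rotM, vert, UpperHalfPlane.coe_mk, Matrix.SpecialLinearGroup.coe_mk,
      Matrix.cons_val', Matrix.cons_val_zero, Matrix.cons_val_one, Matrix.head_cons,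
      Matrix.head_fin_const, Matrix.empty_val', Matrix.cons_val_fin_one,
      Algebra.algebraMap_self, RingHom.id_apply,
      Complex.add_re, Complex.add_im, Complex.mul_re, Complex.mul_im,
      Complex.ofReal_re, Complex.ofReal_im, Complex.zero_re, Complex.zero_im] at h
    unfold Dd at hD
    obtain ⟨h1, h2⟩ := h
    simp at h1 h2
    rw [h1, h2] at hD; simp at hD

lemma dist_rpt (α s t : ℝ) : dist (rpt α s) (rpt α t) = |s - t| := by
  rw [← rpt_eq, ← rpt_eq, dist_smul, dist_vert]

lemma rpt_zero (α : ℝ) : rpt α 0 = vert 0 := by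
  have hpy := Real.sin_sq_add_cos_sq α
  apply UpperHalfPlane.ext
  simp only [rpt, vert, UpperHalfPlane.coe_mk]
  rw [Complex.ext_iff]
  constructor <;> simp [Dd, Real.exp_zero] <;> rw [add_comm] <;> simp [hpy]

lemma cosh_dist_vert_rpt (α s t : ℝ) :
    Real.cosh (dist (vert s) (rpt α t)) =
      Real.cosh s * Real.cosh t - Real.sinh s * Real.sinh t * Real.cos (2*α) := by
  have hD := Dd_pos α t
  have hpy := Real.sin_sq_add_cos_sq α
  rw [UpperHalfPlane.cosh_dist, Complex.dist_eq, Complex.sq_norm, Complex.normSq_apply]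
  simp only [vert, rpt, UpperHalfPlane.coe_mk, UpperHalfPlane.mk_im, Complex.sub_re,
    Complex.sub_im]
  rw [Real.cosh_eq, Real.cosh_eq, Real.sinh_eq, Real.sinh_eq, Real.cos_two_mul]
  simp only [Real.exp_neg]
  field_simp
  unfold Dd
  linear_combination ((-4) * Real.cos α ^ 2 * rexp s * rexp t ^ 3 + (4) * Real.cos α ^ 4 * rexp s * rexp t + (-4) * Real.cos α ^ 4 * rexp s * rexp t ^ 3 + (4) * Real.cos α ^ 4 * rexp s ^ 3 * rexp t ^ 3 + (-4) * Real.sin α ^ 2 * rexp s * rexp t ^ 5 + (4) * Real.sin α ^ 2 * Real.cos α ^ 2 * rexp s * rexp t ^ 3 + (-4) * Real.sin α ^ 2 * Real.cos α ^ 2 * rexp s * rexp t ^ 5 + (8) * Real.sin α ^ 2 * Real.cos α ^ 2 * rexp s ^ 3 * rexp t ^ 5 + (4) * Real.sin α ^ 4 * rexp s ^ 3 * rexp t ^ 7 + ((-4) * Real.sin α ^ 4 * rexp t ^ 7 * rexp s ^ 3 + (-4) * Real.sin α ^ 2 * Real.cos α ^ 2 * rexp t ^ 3 * rexp s ^ 1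 + (2) * Real.sin α ^ 2 * rexp t ^ 4 * rexp s ^ 2 + (4) * Real.sin α ^ 2 * Real.cos α ^ 2 * rexp t ^ 5 * rexp s ^ 1 + (-8) * Real.sin α ^ 2 * Real.cos α ^ 2 * rexp t ^ 5 * rexp s ^ 3 + (4) * Real.sin α ^ 2 * rexp t ^ 5 * rexp s ^ 1 + (-4) * Real.cos α ^ 4 * rexp t ^ 1 * rexp s ^ 1 + (-2) * rexp t ^ 2 + (-2) * Real.cos α ^ 2 * rexp t ^ 2 + (2) * Real.cos α ^ 2 * rexp t ^ 2 * rexp s ^ 2 + (4) * Real.cos α ^ 2 * rexp t ^ 3 * rexp s ^ 1 + (-4) * Real.cos α ^ 4 * rexp t ^ 3 * rexp s ^ 3 + (2) * Real.cos α ^ 2 + (4) * Real.cos α ^ 4 * rexp t ^ 3 * rexp s ^ 1)) * hpy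

/- ## small real analysis helpers -/

lemma cosh_eq_nonneg {x y : ℝ} (hx : 0 ≤ x) (hy : 0 ≤ y)
    (h : Real.cosh x = Real.cosh y) : x = y := by
  have h1 : |x| ≤ |y| := Real.cosh_le_cosh.1 h.le
  have h2 : |y| ≤ |x| := Real.cosh_le_cosh.1 h.ge
  rw [abs_of_nonneg hx, abs_of_nonneg hy] at h1 h2
  linarith

lemma sinh_le_exp_mul {s d : ℝ} (h : s ≤ d) :
    Real.sinh s ≤ Real.exp (s - d) * Real.sinh d := by
  have h1 : Real.exp (s - 2*d) ≤ Real.exp (-s) := Real.exp_le_exp.2 (by linarith)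
  have e1 : Real.exp (s - d) * Real.exp d = Real.exp s := by
    rw [← Real.exp_add]; ring_nf
  have e2 : Real.exp (s - d) * Real.exp (-d) = Real.exp (s - 2*d) := by
    rw [← Real.exp_add]; ring_nf
  rw [Real.sinh_eq, Real.sinh_eq]
  nlinarith [Real.exp_pos d, Real.exp_pos (s-d)]

lemma le_sqrt_of_cosh_le {d c : ℝ} (hd : 0 ≤ d) (h : Real.cosh d - 1 ≤ c) :
    d ≤ Real.sqrt (2 * c) := by
  have h2 : d/2 ≤ Real.sinh (d/2) := Real.self_le_sinh_iff.2 (by linarith)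
  have h3 : Real.cosh d = 1 + 2 * Real.sinh (d/2) ^ 2 := by
    have hh : Real.cosh d = Real.cosh (d/2 + d/2) := by ring_nf
    rw [hh, Real.cosh_add]
    nlinarith [Real.cosh_sq (d/2)]
  have h4 : d ^ 2 ≤ 2 * c := by nlinarith
  have hc : 0 ≤ 2 * c := le_trans (by positivity) h4
  exact (Real.le_sqrt hd hc).2 h4

/- ## comparison triangles in ℍ -/

lemma triangle_angle {d1 d2 d3 : ℝ} (h1 : 0 ≤ d1) (h2 : 0 ≤ d2) (h3 : 0 ≤ d3)
    (t1 : d3 ≤ d1 + d2) (t2 : d1 ≤ d2 + d3) (t3 : d2 ≤ d1 + d3) :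
    ∃ α : ℝ, Real.cosh d3 =
      Real.cosh d1 * Real.cosh d2 - Real.sinh d1 * Real.sinh d2 * Real.cos (2*α) := by
  by_cases hd : Real.sinh d1 * Real.sinh d2 = 0
  · rcases mul_eq_zero.1 hd with h | h
    · have : d1 = 0 := Real.sinh_eq_zero.1 h
      subst this
      have : d3 = d2 := le_antisymm (by linarith) (by linarith)
      subst this
      simp [h]
    · have : d2 = 0 := Real.sinh_eq_zero.1 h
      subst this
      have : d3 = d1 := le_antisymm (by linarith) (by linarith)
      subst this
      simp [h]
  · have hs1 : 0 < Real.sinh d1 := by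
      rcases lt_or_eq_of_le (Real.sinh_nonneg_iff.2 h1) with h | h
      · exact h
      · exact absurd (mul_eq_zero_of_left h.symm _) hd
    have hs2 : 0 < Real.sinh d2 := by
      rcases lt_or_eq_of_le (Real.sinh_nonneg_iff.2 h2) with h | h
      · exact h
      · exact absurd (mul_eq_zero_of_right _ h.symm) hd
    have hpos : 0 < Real.sinh d1 * Real.sinh d2 := mul_pos hs1 hs2
    set cθ := (Real.cosh d1 * Real.cosh d2 - Real.cosh d3) / (Real.sinh d1 * Real.sinh d2) with hcθ
    have hub : Real.cosh (d1 - d2) ≤ Real.cosh d3 := by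
      apply Real.cosh_le_cosh.2
      rw [abs_of_nonneg h3]
      rw [abs_sub_le_iff]
      constructor <;> linarith
    have hlb : Real.cosh d3 ≤ Real.cosh (d1 + d2) := by
      apply Real.cosh_le_cosh.2
      rw [abs_of_nonneg h3, abs_of_nonneg (by linarith : (0:ℝ) ≤ d1 + d2)]
      linarith
    rw [Real.cosh_sub] at hub
    rw [Real.cosh_add] at hlb
    have hc1 : -1 ≤ cθ := by
      rw [hcθ, le_div_iff₀ hpos]
      linarith
    have hc2 : cθ ≤ 1 := by
      rw [hcθ, div_le_iff₀ hpos]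
      linarith
    refine ⟨Real.arccos cθ / 2, ?_⟩
    have : 2 * (Real.arccos cθ / 2) = Real.arccos cθ := by ring
    rw [this, Real.cos_arccos hc1 hc2, hcθ]
    field_simp
    ring


lemma vert_geod {a b : ℝ} (h : a ≤ b) : IsGeodesicOn vert a b :=
  ⟨h, fun s _ t _ => dist_vert s t⟩

lemma rpt_geod (α : ℝ) {a b : ℝ} (h : a ≤ b) : IsGeodesicOn (rpt α) a b :=
  ⟨h, fun s _ t _ => dist_rpt α s t⟩

lemma key {X : Type*} [MetricSpace X] (hX : CATMinusOne X) (p q r : X) (γ δ : ℝ → X)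
    (hγ : IsGeodesicOn γ 0 (dist p q)) (hγ0 : γ 0 = p) (hγ1 : γ (dist p q) = q)
    (hδ : IsGeodesicOn δ 0 (dist p r)) (hδ0 : δ 0 = p) (hδ1 : δ (dist p r) = r)
    (s : ℝ) (hs0 : 0 ≤ s) (hs1 : s ≤ dist p q) (hs2 : s ≤ dist p r) :
    Real.sinh (dist p q) * Real.sinh (dist p r) * (Real.cosh (dist (γ s) (δ s)) - 1) ≤
      Real.sinh s ^ 2 * (Real.cosh (dist q r) - 1) := by
  obtain ⟨α, hα⟩ := triangle_angle (d1 := dist p q) (d2 := dist p r) (d3 := dist q r)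
    dist_nonneg dist_nonneg dist_nonneg
    (by have := dist_triangle q p r; rw [dist_comm q p] at this; linarith)
    (by have := dist_triangle p r q; rw [dist_comm r q] at this; linarith)
    (by have := dist_triangle p q r; linarith)
  set d1 := dist p q with hd1
  set d2 := dist p r with hd2
  set d3 := dist q r with hd3
  have hq' : dist (vert 0) (vert d1) = d1 := by
    rw [dist_vert, zero_sub, abs_neg, abs_of_nonneg dist_nonneg]
  have hr' : dist (vert 0) (rpt α d2) = d2 := by
    rw [← rpt_zero α, dist_rpt, zero_sub, abs_neg, abs_of_nonneg dist_nonneg]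
  have hqr' : dist (vert d1) (rpt α d2) = d3 := by
    apply cosh_eq_nonneg dist_nonneg dist_nonneg
    rw [cosh_dist_vert_rpt, ← hα]
  have hcomp := hX.2 p q r γ δ hγ hγ0 hγ1 hδ hδ0 hδ1 (vert 0) (vert d1) (rpt α d2)
    vert (rpt α) hq' hr' hqr' (vert_geod dist_nonneg) rfl rfl
    (rpt_geod α dist_nonneg) (rpt_zero α) rfl s ⟨hs0, hs1⟩ s ⟨hs0, hs2⟩
  have hcosh : Real.cosh (dist (γ s) (δ s)) ≤
      Real.cosh s * Real.cosh s - Real.sinh s * Real.sinh s * Real.cos (2*α) := by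
    rw [← cosh_dist_vert_rpt α s s]
    exact Real.cosh_le_cosh.2
      (by rw [abs_of_nonneg dist_nonneg, abs_of_nonneg dist_nonneg]; exact hcomp)
  have hid : Real.cosh s * Real.cosh s - Real.sinh s * Real.sinh s * Real.cos (2*α)
      = 1 + Real.sinh s ^ 2 * (1 - Real.cos (2*α)) := by
    linear_combination Real.cosh_sq s
  have hba : Real.sinh d1 * Real.sinh d2 * (1 - Real.cos (2*α))
      = Real.cosh d3 - Real.cosh (d1 - d2) := by
    rw [Real.cosh_sub]; linear_combination -hα
  rw [hid] at hcosh
  have h5 : Real.cosh (dist (γ s) (δ s)) - 1 ≤ Real.sinh s ^ 2 * (1 - Real.cos (2*α)) := by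
    linarith
  have hnn : 0 ≤ Real.sinh d1 * Real.sinh d2 :=
    mul_nonneg (Real.sinh_nonneg_iff.2 dist_nonneg) (Real.sinh_nonneg_iff.2 dist_nonneg)
  calc Real.sinh d1 * Real.sinh d2 * (Real.cosh (dist (γ s) (δ s)) - 1)
      ≤ Real.sinh d1 * Real.sinh d2 * (Real.sinh s ^ 2 * (1 - Real.cos (2*α))) :=
        mul_le_mul_of_nonneg_left h5 hnn
    _ = Real.sinh s ^ 2 * (Real.cosh d3 - Real.cosh (d1 - d2)) := by
        rw [← hba]; ring
    _ ≤ Real.sinh s ^ 2 * (Real.cosh d3 - 1) :=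
        mul_le_mul_of_nonneg_left (by linarith [Real.one_le_cosh (d1 - d2)]) (sq_nonneg _)


lemma near_pt {X : Type*} [MetricSpace X] {s : Set X} {x : X} {ρ ρ₁ : ℝ}
    (h : x ∈ Metric.cthickening ρ s) (h1 : max ρ 0 < ρ₁) : ∃ a ∈ s, dist x a ≤ ρ₁ := by
  have hρ₁ : 0 < ρ₁ := lt_of_le_of_lt (le_max_right ρ 0) h1
  have h2 : EMetric.infEdist x s < ENNReal.ofReal ρ₁ := by
    refine lt_of_le_of_lt (Metric.mem_cthickening_iff.1 h) ?_
    refine lt_of_le_of_lt (ENNReal.ofReal_le_ofReal (le_max_left ρ 0)) ?_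
    exact (ENNReal.ofReal_lt_ofReal_iff hρ₁).2 h1
  obtain ⟨a, ha, hd⟩ := EMetric.infEdist_lt_iff.1 h2
  refine ⟨a, ha, le_of_lt ?_⟩
  rw [edist_dist] at hd
  exact (ENNReal.ofReal_lt_ofReal_iff_of_nonneg dist_nonneg).1 hd

lemma setDist_le {X : Type*} [MetricSpace X] {A B : Set X} {a b : X}
    (ha : a ∈ A) (hb : b ∈ B) : setDist A B ≤ dist a b := by
  apply csInf_le
  · refine ⟨0, ?_⟩
    rintro y ⟨p, _, rfl⟩
    exact dist_nonneg
  · exact ⟨(a, b), Set.mk_mem_prod ha hb, rfl⟩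


set_option maxHeartbeats 2000000 in
/-- An `r`-separated family of convex subsets of a CAT(-1)
space has bounded penetration: the intersection of the `ρ`-neighborhoods of two
distinct members has diameter bounded by a function of `ρ` alone. -/
theorem statement1 {X : Type*} [MetricSpace X] (hX : CATMinusOne X)
    {ι : Type*} (C : ι → Set X) (r : ℝ) (hr : 0 < r)
    (hconv : ∀ i, GConvex (C i))
    (hsep : ∀ i j, i ≠ j → r ≤ setDist (C i) (C j)) :
    ∃ D : ℝ → ℝ, ∀ (ρ : ℝ) (i j : ι), i ≠ j →
      EMetric.diam (Metric.cthickening ρ (C i) ∩ Metric.cthickening ρ (C j)) ≤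
        ENNReal.ofReal (D ρ) := by
  refine ⟨fun ρ => max (10 * (max ρ 0 + 1))
      (6 * (max ρ 0 + 1) +
        Real.log (8 * (Real.cosh (2 * (max ρ 0 + 1)) - 1) / r ^ 2)), fun ρ i j hij => ?_⟩
  apply EMetric.diam_le
  intro x hx y hy
  rw [edist_dist]
  apply ENNReal.ofReal_le_ofReal
  set ρ₁ := max ρ 0 + 1 with hρ₁def
  have hρ₁ : 1 ≤ ρ₁ := by
    have := le_max_right ρ 0; linarith
  have hmax : max ρ 0 < ρ₁ := by linarith
  set L := dist x y with hLdef
  set B := Real.cosh (2 * ρ₁) - 1 with hBdef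
  have hB : 0 < B := by
    have : (1:ℝ) < Real.cosh (2 * ρ₁) := Real.one_lt_cosh.2 (by positivity)
    linarith
  by_cases hL : L ≤ 10 * ρ₁
  · exact le_trans hL (le_max_left _ _)
  push_neg at hL
  -- nearby points on the convex sets
  obtain ⟨a, haC, hax⟩ := near_pt hx.1 hmax
  obtain ⟨b, hbC, hbx⟩ := near_pt hx.2 hmax
  obtain ⟨a', haC', hay⟩ := near_pt hy.1 hmax
  obtain ⟨b', hbC', hby⟩ := near_pt hy.2 hmax
  -- geodesics
  obtain ⟨γa, hγa, hγa0, hγa1⟩ := hX.1 a a'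
  obtain ⟨δ, hδ, hδ0, hδ1⟩ := hX.1 a b'
  obtain ⟨β, hβ, hβ0, hβ1⟩ := hX.1 b' b
  set ℓ := dist a a' with hℓdef
  set d2 := dist a b' with hd2def
  set ℓ' := dist b' b with hℓ'def
  -- distance estimates
  have hℓlow : L - 2 * ρ₁ ≤ ℓ := by
    have h4 := dist_triangle4 x a a' y
    have : dist a' y = dist y a' := dist_comm _ _
    rw [hLdef]; linarith
  have hℓup : ℓ ≤ L + 2 * ρ₁ := by
    have h4 := dist_triangle4 a x y a'
    have h5 : dist a x = dist x a := dist_comm _ _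
    have h6 : dist y a' = dist y a' := rfl
    rw [hℓdef]; linarith
  have hd2low : L - 2 * ρ₁ ≤ d2 := by
    have h4 := dist_triangle4 x a b' y
    have : dist b' y = dist y b' := dist_comm _ _
    rw [hLdef]; linarith
  have hd2up : d2 ≤ L + 2 * ρ₁ := by
    have h4 := dist_triangle4 a x y b'
    have h5 : dist a x = dist x a := dist_comm _ _
    rw [hd2def]; linarith
  have hℓ'low : L - 2 * ρ₁ ≤ ℓ' := by
    have h4 := dist_triangle4 x b' b y
    have h5 : dist b' x ≤ dist x b' := le_of_eq (dist_comm _ _)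
    have h6 := dist_triangle4 y b' b x
    have h7 : dist y x = dist x y := dist_comm _ _
    have h8 : dist b x = dist x b := dist_comm _ _
    rw [hℓ'def]; linarith
  have hℓ'up : ℓ' ≤ L + 2 * ρ₁ := by
    have h4 := dist_triangle4 b' y x b
    have h5 : dist y x = dist x y := dist_comm _ _
    have h6 : dist b' y = dist y b' := dist_comm _ _
    rw [hℓ'def]; linarith
  have hℓpos : 0 < ℓ := by linarith
  have hd2pos : 0 < d2 := by linarith
  have hℓ'pos : 0 < ℓ' := by linarith
  set s₀ := min ℓ d2 / 2 with hs₀def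
  have hmin1 : L - 2*ρ₁ ≤ min ℓ d2 := le_min hℓlow hd2low
  have hs₀0 : 0 ≤ s₀ := by
    have := min_le_left ℓ d2; rw [hs₀def]; positivity
  have hs₀ℓ : s₀ ≤ ℓ := by
    have := min_le_left ℓ d2; rw [hs₀def]; linarith
  have hs₀d2 : s₀ ≤ d2 := by
    have := min_le_right ℓ d2; rw [hs₀def]; linarith
  set u := d2 - s₀ with hudef
  have hu0 : 0 ≤ u := by rw [hudef]; linarith
  have hud2 : u ≤ d2 := by rw [hudef]; linarith
  have huℓ' : u ≤ ℓ' := by rw [hudef, hs₀def]; linarith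
  -- membership of midpoints
  have hm : γa s₀ ∈ C i := by
    apply hconv i γa 0 ℓ hγa
    · rw [hγa0]; exact haC
    · rw [hγa1]; exact haC'
    · exact ⟨hs₀0, hs₀ℓ⟩
  have hn : β u ∈ C j := by
    apply hconv j β 0 ℓ' hβ
    · rw [hβ0]; exact hbC'
    · rw [hβ1]; exact hbC
    · exact ⟨hu0, huℓ'⟩
  -- triangle 1 : (a, a', b')
  have hkey1 := key hX a a' b' γa δ hγa hγa0 hγa1 hδ hδ0 hδ1 s₀ hs₀0 hs₀ℓ hs₀d2
  -- triangle 2 : (b', a, b), with reversed δ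
  have hba' : dist b' a = d2 := dist_comm b' a
  have hγ2 : IsGeodesicOn (fun t => δ (d2 - t)) 0 (dist b' a) := by
    rw [hba']
    refine ⟨le_of_lt hd2pos, fun s hs t ht => ?_⟩
    have h1 : d2 - s ∈ Set.Icc 0 d2 := ⟨by linarith [hs.2], by linarith [hs.1]⟩
    have h2 : d2 - t ∈ Set.Icc 0 d2 := ⟨by linarith [ht.2], by linarith [ht.1]⟩
    rw [hδ.2 _ h1 _ h2]
    rw [show d2 - s - (d2 - t) = t - s by ring, abs_sub_comm]
  have hγ20 : (fun t => δ (d2 - t)) 0 = b' := by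
    simp only [sub_zero]; exact hδ1
  have hγ21 : (fun t => δ (d2 - t)) (dist b' a) = a := by
    rw [hba']; simp only [sub_self]; exact hδ0
  have hkey2 := key hX b' a b (fun t => δ (d2 - t)) β hγ2 hγ20 hγ21 hβ hβ0 hβ1 u hu0
    (by rw [hba']; exact hud2) huℓ'
  rw [hba'] at hkey2
  have hγ2u : (fun t => δ (d2 - t)) u = δ s₀ := congrArg δ (by rw [hudef]; ring)
  rw [show δ (d2 - u) = δ s₀ from hγ2u] at hkey2
  -- sizes of the short sides
  have hab' : Real.cosh (dist a' b') - 1 ≤ B := by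
    have h1 : dist a' b' ≤ 2 * ρ₁ := by
      have := dist_triangle a' y b'
      have h2 : dist a' y = dist y a' := dist_comm _ _
      linarith
    have h2 : Real.cosh (dist a' b') ≤ Real.cosh (2 * ρ₁) := by
      apply Real.cosh_le_cosh.2
      rw [abs_of_nonneg dist_nonneg, abs_of_nonneg (by positivity : (0:ℝ) ≤ 2 * ρ₁)]
      exact h1
    rw [hBdef]; linarith
  have hab : Real.cosh (dist a b) - 1 ≤ B := by
    have h1 : dist a b ≤ 2 * ρ₁ := by
      have := dist_triangle a x b
      have h2 : dist a x = dist x a := dist_comm _ _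
      linarith
    have h2 : Real.cosh (dist a b) ≤ Real.cosh (2 * ρ₁) := by
      apply Real.cosh_le_cosh.2
      rw [abs_of_nonneg dist_nonneg, abs_of_nonneg (by positivity : (0:ℝ) ≤ 2 * ρ₁)]
      exact h1
    rw [hBdef]; linarith
  -- bound E1
  have hsinhℓ : 0 < Real.sinh ℓ := Real.sinh_pos_iff.2 hℓpos
  have hsinhd2 : 0 < Real.sinh d2 := Real.sinh_pos_iff.2 hd2pos
  have hsinhℓ' : 0 < Real.sinh ℓ' := Real.sinh_pos_iff.2 hℓ'pos
  have hE1 : dist (γa s₀) (δ s₀) ≤ Real.sqrt (2 * (Real.exp (6*ρ₁ - L) * B)) := by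
    have h1 : Real.sinh s₀ ≤ Real.exp (s₀ - ℓ) * Real.sinh ℓ := sinh_le_exp_mul hs₀ℓ
    have h2 : Real.sinh s₀ ≤ Real.exp (s₀ - d2) * Real.sinh d2 := sinh_le_exp_mul hs₀d2
    have h0 : 0 ≤ Real.sinh s₀ := Real.sinh_nonneg_iff.2 hs₀0
    have hsq : Real.sinh s₀ ^ 2 ≤
        (Real.exp (s₀ - ℓ) * Real.sinh ℓ) * (Real.exp (s₀ - d2) * Real.sinh d2) := by
      rw [sq]
      exact mul_le_mul h1 h2 h0 (mul_nonneg (Real.exp_pos _).le hsinhℓ.le)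
    have hchain : Real.sinh ℓ * Real.sinh d2 * (Real.cosh (dist (γa s₀) (δ s₀)) - 1) ≤
        Real.sinh ℓ * Real.sinh d2 * (Real.exp (s₀ - ℓ) * Real.exp (s₀ - d2) * B) := by
      calc Real.sinh ℓ * Real.sinh d2 * (Real.cosh (dist (γa s₀) (δ s₀)) - 1)
          ≤ Real.sinh s₀ ^ 2 * (Real.cosh (dist a' b') - 1) := hkey1
        _ ≤ ((Real.exp (s₀ - ℓ) * Real.sinh ℓ) * (Real.exp (s₀ - d2) * Real.sinh d2)) * B := by
            apply mul_le_mul hsq hab' (by linarith [Real.one_le_cosh (dist a' b')]) ?_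
            positivity
        _ = Real.sinh ℓ * Real.sinh d2 * (Real.exp (s₀ - ℓ) * Real.exp (s₀ - d2) * B) := by
            ring
    have hE1c : Real.cosh (dist (γa s₀) (δ s₀)) - 1 ≤
        Real.exp (s₀ - ℓ) * Real.exp (s₀ - d2) * B :=
      le_of_mul_le_mul_left hchain (mul_pos hsinhℓ hsinhd2)
    have hexp : Real.exp (s₀ - ℓ) * Real.exp (s₀ - d2) ≤ Real.exp (6*ρ₁ - L) := by
      rw [← Real.exp_add]
      apply Real.exp_le_exp.2
      have hm2 : min ℓ d2 ≤ ℓ := min_le_left _ _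
      rw [hs₀def]; linarith
    have hE1c' : Real.cosh (dist (γa s₀) (δ s₀)) - 1 ≤ Real.exp (6*ρ₁ - L) * B := by
      have := mul_le_mul_of_nonneg_right hexp hB.le
      linarith
    exact le_sqrt_of_cosh_le dist_nonneg hE1c'
  have hE2 : dist (δ s₀) (β u) ≤ Real.sqrt (2 * (Real.exp (6*ρ₁ - L) * B)) := by
    have h1 : Real.sinh u ≤ Real.exp (u - d2) * Real.sinh d2 := sinh_le_exp_mul hud2
    have h2 : Real.sinh u ≤ Real.exp (u - ℓ') * Real.sinh ℓ' := sinh_le_exp_mul huℓ'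
    have h0 : 0 ≤ Real.sinh u := Real.sinh_nonneg_iff.2 hu0
    have hsq : Real.sinh u ^ 2 ≤
        (Real.exp (u - d2) * Real.sinh d2) * (Real.exp (u - ℓ') * Real.sinh ℓ') := by
      rw [sq]
      exact mul_le_mul h1 h2 h0 (mul_nonneg (Real.exp_pos _).le hsinhd2.le)
    have hchain : Real.sinh d2 * Real.sinh ℓ' * (Real.cosh (dist (δ s₀) (β u)) - 1) ≤
        Real.sinh d2 * Real.sinh ℓ' * (Real.exp (u - d2) * Real.exp (u - ℓ') * B) := by
      calc Real.sinh d2 * Real.sinh ℓ' * (Real.cosh (dist (δ s₀) (β u)) - 1)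
          ≤ Real.sinh u ^ 2 * (Real.cosh (dist a b) - 1) := hkey2
        _ ≤ ((Real.exp (u - d2) * Real.sinh d2) * (Real.exp (u - ℓ') * Real.sinh ℓ')) * B := by
            apply mul_le_mul hsq hab (by linarith [Real.one_le_cosh (dist a b)]) ?_
            positivity
        _ = Real.sinh d2 * Real.sinh ℓ' * (Real.exp (u - d2) * Real.exp (u - ℓ') * B) := by
            ring
    have hE2c : Real.cosh (dist (δ s₀) (β u)) - 1 ≤
        Real.exp (u - d2) * Real.exp (u - ℓ') * B :=
      le_of_mul_le_mul_left hchain (mul_pos hsinhd2 hsinhℓ')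
    have hexp : Real.exp (u - d2) * Real.exp (u - ℓ') ≤ Real.exp (6*ρ₁ - L) := by
      rw [← Real.exp_add]
      apply Real.exp_le_exp.2
      rw [hudef, hs₀def]
      linarith
    have hE2c' : Real.cosh (dist (δ s₀) (β u)) - 1 ≤ Real.exp (6*ρ₁ - L) * B := by
      have := mul_le_mul_of_nonneg_right hexp hB.le
      linarith
    exact le_sqrt_of_cosh_le dist_nonneg hE2c'
  -- separation gives the final bound
  have hrmn : r ≤ dist (γa s₀) (β u) :=
    le_trans (hsep i j hij) (setDist_le hm hn)
  have htri : dist (γa s₀) (β u) ≤ dist (γa s₀) (δ s₀) + dist (δ s₀) (β u) :=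
    dist_triangle _ _ _
  set Z := Real.sqrt (2 * (Real.exp (6*ρ₁ - L) * B)) with hZdef
  have hZ0 : 0 ≤ Z := Real.sqrt_nonneg _
  have hrZ : r ≤ 2 * Z := by linarith
  have hZsq : Z ^ 2 = 2 * (Real.exp (6*ρ₁ - L) * B) := Real.sq_sqrt (by positivity)
  have hr2 : r ^ 2 ≤ 8 * B * Real.exp (6*ρ₁ - L) := by
    have h1 : r ^ 2 ≤ (2 * Z) ^ 2 := pow_le_pow_left₀ hr.le hrZ 2
    have h2 : (2 * Z) ^ 2 = 8 * B * Real.exp (6*ρ₁ - L) := by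
      rw [mul_pow, hZsq]; ring
    linarith
  have h8 : (0:ℝ) < 8 * B / r ^ 2 := by positivity
  have hexp8 : Real.exp (L - 6*ρ₁) ≤ 8 * B / r ^ 2 := by
    rw [le_div_iff₀ (by positivity : (0:ℝ) < r ^ 2)]
    have hee : Real.exp (L - 6*ρ₁) * Real.exp (6*ρ₁ - L) = 1 := by
      rw [← Real.exp_add]
      norm_num
    calc Real.exp (L - 6*ρ₁) * r ^ 2
        ≤ Real.exp (L - 6*ρ₁) * (8 * B * Real.exp (6*ρ₁ - L)) :=
          mul_le_mul_of_nonneg_left hr2 (Real.exp_pos _).le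
      _ = 8 * B * (Real.exp (L - 6*ρ₁) * Real.exp (6*ρ₁ - L)) := by ring
      _ = 8 * B := by rw [hee]; ring
  have hlog : L - 6*ρ₁ ≤ Real.log (8 * B / r ^ 2) := (Real.le_log_iff_exp_le h8).2 hexp8
  have : L ≤ 6 * ρ₁ + Real.log (8 * B / r ^ 2) := by linarith
  exact le_trans this (le_max_right _ _)


end BP
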